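/- arXiv:2504.14513 — 2 statements merged into one kernel-verified Lean document; each statement's English description precedes it below -/
import Mathlib

section
/- For every odd prime p and every fixed integer t, there are exactly p-1 residue classes n modulo p·(p-1) in {0, 1, ..., p(p-1)-1} such that p divides n·2^n + 1 - t. -/
theorem count_residues_dividing_cullen_shift (p : ℕ) (hp : p.Prime) (hodd : Odd p)
    (t : ℤ) :
    ((Finset.range (p * (p - 1))).filter
      (fun n : ℕ => (p : ℤ) ∣ (n : ℤ) * (2 : ℤ) ^ n + 1 - t)).card = p - 1 := by
  haveI : Fact p.Prime := ⟨hp⟩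
  have hp2 : p ≠ 2 := by
    rintro rfl
    rw [Nat.odd_iff] at hodd; omega
  have hp1 : 1 < p := hp.one_lt
  have hq0 : p - 1 ≠ 0 := by omega
  have h2 : (2 : ZMod p) ≠ 0 := by
    intro h
    have hdvd : (p : ℕ) ∣ 2 := (ZMod.natCast_eq_zero_iff 2 p).mp (by exact_mod_cast h)
    exact hp2 ((Nat.prime_dvd_prime_iff_eq hp Nat.prime_two).mp hdvd)
  have hco : Nat.Coprime p (p - 1) := by
    have := Nat.gcd_self_sub_right (by omega : 1 ≤ p)
    simpa [Nat.Coprime] using this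
  -- condition in ZMod p
  have cond_iff : ∀ n : ℕ, ((p : ℤ) ∣ (n : ℤ) * (2 : ℤ) ^ n + 1 - t) ↔
      ((n : ZMod p) * 2 ^ n = (t : ZMod p) - 1) := by
    intro n
    rw [← ZMod.intCast_zmod_eq_zero_iff_dvd]
    push_cast
    constructor <;> intro h <;> linear_combination h
  -- Fermat reduction
  have two_pow_mod : ∀ n : ℕ, (2 : ZMod p) ^ n = 2 ^ (n % (p - 1)) := by
    intro n
    conv_lhs => rw [← Nat.mod_add_div n (p - 1)]
    rw [pow_add, pow_mul, ZMod.pow_card_sub_one_eq_one h2, one_pow, mul_one]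
  have key : ((Finset.range (p * (p - 1))).filter
      (fun n : ℕ => (p : ℤ) ∣ (n : ℤ) * (2 : ℤ) ^ n + 1 - t)).card
      = (Finset.range (p - 1)).card := by
    apply Finset.card_bij (fun n _ => n % (p - 1))
    · intro n hn
      exact Finset.mem_range.mpr (Nat.mod_lt _ (by omega))
    · intro n₁ h₁ n₂ h₂ hmod
      simp only [Finset.mem_filter, Finset.mem_range] at h₁ h₂
      have e₁ := (cond_iff n₁).mp h₁.2
      have e₂ := (cond_iff n₂).mp h₂.2
      rw [two_pow_mod n₁] at e₁
      rw [two_pow_mod n₂, ← hmod] at e₂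
      have hpow : (2 : ZMod p) ^ (n₁ % (p - 1)) ≠ 0 := pow_ne_zero _ h2
      have hcast : (n₁ : ZMod p) = (n₂ : ZMod p) :=
        mul_right_cancel₀ hpow (e₁.trans e₂.symm)
      have hmp : n₁ ≡ n₂ [MOD p] := (ZMod.natCast_eq_natCast_iff _ _ _).mp hcast
      have hmq : n₁ ≡ n₂ [MOD p - 1] := hmod
      have hmpq : n₁ ≡ n₂ [MOD p * (p - 1)] :=
        (Nat.modEq_and_modEq_iff_modEq_mul hco).mp ⟨hmp, hmq⟩
      have h' : n₁ % (p * (p - 1)) = n₂ % (p * (p - 1)) := hmpq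
      rw [Nat.mod_eq_of_lt h₁.1, Nat.mod_eq_of_lt h₂.1] at h'
      exact h'
    · intro a ha
      rw [Finset.mem_range] at ha
      set c : ZMod p := ((t : ZMod p) - 1) * ((2 : ZMod p) ^ a)⁻¹ with hc
      obtain ⟨k0, hk1, hk2⟩ := Nat.chineseRemainder hco c.val a
      -- replace k0 by its residue mod p*(p-1)
      set k := k0 % (p * (p - 1)) with hkdef
      have hmk : k ≡ k0 [MOD p * (p - 1)] := Nat.mod_modEq k0 (p * (p - 1))
      have hk1' : k ≡ c.val [MOD p] :=
        (hmk.of_dvd (dvd_mul_right p (p - 1))).trans hk1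
      have hk2' : k ≡ a [MOD p - 1] :=
        (hmk.of_dvd (dvd_mul_left (p - 1) p)).trans hk2
      have hklt : k < p * (p - 1) := Nat.mod_lt _ (by positivity)
      have hka : k % (p - 1) = a := by
        have h' : k % (p - 1) = a % (p - 1) := hk2'
        rwa [Nat.mod_eq_of_lt ha] at h'
      refine ⟨k, Finset.mem_filter.mpr ⟨Finset.mem_range.mpr hklt, ?_⟩, hka⟩
      rw [cond_iff k, two_pow_mod k, hka]
      have hkc : (k : ZMod p) = c := by
        have h' := (ZMod.natCast_eq_natCast_iff _ _ _).mpr hk1'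
        rwa [ZMod.natCast_val, ZMod.cast_id] at h'
      rw [hkc, hc, mul_assoc, inv_mul_cancel₀ (pow_ne_zero _ h2), mul_one]
  rw [key, Finset.card_range]
end

section
/- Let p be an odd prime, t an integer, and suppose n₀ satisfies n₀·2^{n₀} + 1 - t ≡ 0 (mod p^j) for some j ≥ 1. Then among the p numbers n = n₀ + (p-1)·p^j·ℓ with ℓ ∈ {0, 1, ..., p-1}, exactly one satisfies n·2^n + 1 - t ≡ 0 (mod p^{j+1}), namely the one with ℓ ≡ 2^{-n₀}·(n₀·2^{n₀} + 1 - t)/p^j (mod p). -/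
theorem hensel_type_lifting (p : ℕ) (hp : p.Prime) (hodd : Odd p) (t : ℤ)
    (n₀ j : ℕ) (hj : 1 ≤ j)
    (h : (p : ℤ) ^ j ∣ (n₀ : ℤ) * 2 ^ n₀ + 1 - t) :
    (∃! ℓ : ℕ, ℓ < p ∧
      (p : ℤ) ^ (j + 1) ∣
        ((n₀ + (p - 1) * p ^ j * ℓ : ℕ) : ℤ) * 2 ^ (n₀ + (p - 1) * p ^ j * ℓ)
          + 1 - t) ∧
    (∀ ℓ : ℕ, ℓ < p →
      (p : ℤ) ^ (j + 1) ∣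
        ((n₀ + (p - 1) * p ^ j * ℓ : ℕ) : ℤ) * 2 ^ (n₀ + (p - 1) * p ^ j * ℓ)
          + 1 - t →
      (2 : ℤ) ^ n₀ * ℓ ≡ ((n₀ : ℤ) * 2 ^ n₀ + 1 - t) / (p : ℤ) ^ j [ZMOD p]) := by
  haveI : Fact p.Prime := ⟨hp⟩
  obtain ⟨c, hc⟩ := h
  have hp0 : (p : ℤ) ≠ 0 := by exact_mod_cast hp.ne_zero
  have hpj0 : (p : ℤ) ^ j ≠ 0 := pow_ne_zero _ hp0
  have hdiv : ((n₀ : ℤ) * 2 ^ n₀ + 1 - t) / (p : ℤ) ^ j = c := by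
    rw [hc]; exact Int.mul_ediv_cancel_left _ hpj0
  have h1p : 1 ≤ p := hp.one_le
  -- 2 is nonzero in ZMod p
  have hpn2 : ¬ (p ∣ 2) := by
    intro hd
    have hp2 : p = 2 := (Nat.prime_dvd_prime_iff_eq hp Nat.prime_two).mp hd
    rw [hp2] at hodd
    exact absurd hodd (by decide)
  have h2z : (2 : ZMod p) ≠ 0 := by
    have : ((2 : ℕ) : ZMod p) ≠ 0 := by
      rw [Ne, ZMod.natCast_eq_zero_iff]
      exact hpn2
    simpa using this
  have h2pow : (2 : ZMod p) ^ n₀ ≠ 0 := pow_ne_zero _ h2z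
  -- Euler's theorem
  have hcop : Nat.Coprime 2 (p ^ (j + 1)) :=
    Nat.Coprime.pow_right _ (Nat.coprime_two_left.mpr hodd)
  have htot : (2 : ℕ) ^ ((p - 1) * p ^ j) ≡ 1 [MOD p ^ (j + 1)] := by
    have := Nat.ModEq.pow_totient hcop
    rwa [Nat.totient_prime_pow hp (Nat.succ_pos j), Nat.succ_sub_one,
      Nat.mul_comm] at this
  have heuler : (2 : ℤ) ^ ((p - 1) * p ^ j) ≡ 1 [ZMOD ((p ^ (j + 1) : ℕ) : ℤ)] := by
    have := (Int.natCast_modEq_iff).mpr htot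
    push_cast at this
    exact_mod_cast this
  have heuler' : (2 : ℤ) ^ ((p - 1) * p ^ j) ≡ 1 [ZMOD (p : ℤ) ^ (j + 1)] := by
    have := heuler
    push_cast at this
    exact this
  -- key equivalence
  have key : ∀ ℓ : ℕ,
      ((p : ℤ) ^ (j + 1) ∣
        ((n₀ + (p - 1) * p ^ j * ℓ : ℕ) : ℤ) * 2 ^ (n₀ + (p - 1) * p ^ j * ℓ)
          + 1 - t) ↔ (2 : ℤ) ^ n₀ * ℓ ≡ c [ZMOD (p : ℕ)] := by
    intro ℓ
    have hpow : (2 : ℤ) ^ (n₀ + (p - 1) * p ^ j * ℓ)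
        ≡ 2 ^ n₀ [ZMOD (p : ℤ) ^ (j + 1)] := by
      calc (2 : ℤ) ^ (n₀ + (p - 1) * p ^ j * ℓ)
          = 2 ^ n₀ * ((2 : ℤ) ^ ((p - 1) * p ^ j)) ^ ℓ := by
            rw [pow_add, pow_mul]
        _ ≡ 2 ^ n₀ * 1 ^ ℓ [ZMOD (p : ℤ) ^ (j + 1)] :=
            Int.ModEq.mul_left _ (heuler'.pow ℓ)
        _ = 2 ^ n₀ := by ring
    have hN : ((n₀ + (p - 1) * p ^ j * ℓ : ℕ) : ℤ)
        = (n₀ : ℤ) + ((p : ℤ) - 1) * (p : ℤ) ^ j * ℓ := by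
      push_cast [Nat.cast_sub h1p]
      ring
    have hmain : ((n₀ + (p - 1) * p ^ j * ℓ : ℕ) : ℤ)
          * 2 ^ (n₀ + (p - 1) * p ^ j * ℓ) + 1 - t
        ≡ (p : ℤ) ^ j * (c + ((p : ℤ) - 1) * ℓ * 2 ^ n₀)
          [ZMOD (p : ℤ) ^ (j + 1)] := by
      calc ((n₀ + (p - 1) * p ^ j * ℓ : ℕ) : ℤ)
            * 2 ^ (n₀ + (p - 1) * p ^ j * ℓ) + 1 - t
          ≡ ((n₀ + (p - 1) * p ^ j * ℓ : ℕ) : ℤ) * 2 ^ n₀ + 1 - t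
            [ZMOD (p : ℤ) ^ (j + 1)] :=
            ((Int.ModEq.mul_left _ hpow).add_right 1).sub_right t
        _ = (p : ℤ) ^ j * (c + ((p : ℤ) - 1) * ℓ * 2 ^ n₀) := by
            rw [hN]; linear_combination hc
    have step1 : ((p : ℤ) ^ (j + 1) ∣
        ((n₀ + (p - 1) * p ^ j * ℓ : ℕ) : ℤ) * 2 ^ (n₀ + (p - 1) * p ^ j * ℓ)
          + 1 - t)
        ↔ (p : ℤ) ^ (j + 1) ∣ (p : ℤ) ^ j * (c + ((p : ℤ) - 1) * ℓ * 2 ^ n₀) := by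
      constructor
      · intro hd; exact (Int.modEq_zero_iff_dvd).mp (hmain.symm.trans
          ((Int.modEq_zero_iff_dvd).mpr hd))
      · intro hd; exact (Int.modEq_zero_iff_dvd).mp (hmain.trans
          ((Int.modEq_zero_iff_dvd).mpr hd))
    rw [step1, pow_succ, mul_dvd_mul_iff_left hpj0]
    have heq : c + ((p : ℤ) - 1) * ℓ * 2 ^ n₀
        = (p : ℤ) * (ℓ * 2 ^ n₀) + (c - 2 ^ n₀ * ℓ) := by ring
    rw [heq, dvd_add_right (dvd_mul_right _ _)]
    exact Int.modEq_iff_dvd.symm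
  -- reformulate key in ZMod p
  have key' : ∀ ℓ : ℕ,
      ((p : ℤ) ^ (j + 1) ∣
        ((n₀ + (p - 1) * p ^ j * ℓ : ℕ) : ℤ) * 2 ^ (n₀ + (p - 1) * p ^ j * ℓ)
          + 1 - t) ↔ (2 : ZMod p) ^ n₀ * ℓ = (c : ZMod p) := by
    intro ℓ
    rw [key ℓ, ← ZMod.intCast_eq_intCast_iff]
    push_cast
    rfl
  -- the witness
  set x : ZMod p := (c : ZMod p) * ((2 : ZMod p) ^ n₀)⁻¹ with hx
  have hxval : (2 : ZMod p) ^ n₀ * (x.val : ZMod p) = (c : ZMod p) := by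
    rw [ZMod.natCast_val, ZMod.cast_id, hx]
    field_simp
  refine ⟨⟨x.val, ⟨ZMod.val_lt x, (key' x.val).mpr hxval⟩, ?_⟩, ?_⟩
  · rintro ℓ' ⟨hℓ'lt, hℓ'⟩
    have h1 : (2 : ZMod p) ^ n₀ * ℓ' = (c : ZMod p) := (key' ℓ').mp hℓ'
    have h2 : (ℓ' : ZMod p) = (x.val : ZMod p) := by
      have := h1.trans hxval.symm
      exact mul_left_cancel₀ h2pow this
    have := congrArg ZMod.val h2
    rwa [ZMod.val_cast_of_lt hℓ'lt, ZMod.val_cast_of_lt (ZMod.val_lt x)] at this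
  · intro ℓ hℓlt hℓ
    rw [hdiv]
    exact (key ℓ).mp hℓ
end
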